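/- Let H and G be real Hilbert spaces, let M : H → G be a bounded linear operator such that M M* = θ Id for some θ > 0, let D be a nonempty closed convex subset of G, let μ > 0, let φ : ℝ → ℝ be even, convex, and differentiable with a μ-Lipschitzian derivative, and set h = φ ∘ d_D ∘ M. Let γ > 0 and x ∈ H. Then prox_{γh} x = x + (θ⁻¹ (d_D(Mx) − prox_{γθφ} d_D(Mx))/d_D(Mx)) M*( proj_D(Mx) − Mx ) if Mx ∉ D, and prox_{γh} x = x if Mx ∈ D. -/

import Mathlib

set_option maxHeartbeats 1000000 in
/-- In the setting of Statement 11 (`M M* = θ Id`, `h = φ ∘ d_D ∘ M`),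
for `γ > 0` and `x ∈ H`:
`prox_{γh} x = x + (θ⁻¹ (d_D(Mx) − prox_{γθφ}(d_D(Mx)))/d_D(Mx)) • M*(proj_D(Mx) − Mx)`
if `Mx ∉ D`, and `prox_{γh} x = x` if `Mx ∈ D`. -/
theorem stmt_12 {H : Type*} [NormedAddCommGroup H] [InnerProductSpace ℝ H] [CompleteSpace H]
    {G : Type*} [NormedAddCommGroup G] [InnerProductSpace ℝ G] [CompleteSpace G]
    (M : H →L[ℝ] G) (θ : ℝ) (hθ : 0 < θ)
    (hM : M.comp (ContinuousLinearMap.adjoint M) = θ • ContinuousLinearMap.id ℝ G)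
    (D : Set G) (hDne : D.Nonempty) (hDclosed : IsClosed D) (hDconv : Convex ℝ D)
    (μ : ℝ) (hμ : 0 < μ)
    (φ : ℝ → ℝ) (heven : ∀ t, φ (-t) = φ t) (hconv : ConvexOn ℝ Set.univ φ)
    (φ' : ℝ → ℝ) (hderiv : ∀ t, HasDerivAt φ (φ' t) t)
    (hlip : LipschitzWith (Real.toNNReal μ) φ')
    (h : H → ℝ) (hdef : ∀ x, h x = φ (Metric.infDist (M x) D))
    (projD : G → G)
    (hproj : ∀ y, projD y ∈ D ∧ ∀ z ∈ D, dist y (projD y) ≤ dist y z)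
    (γ : ℝ) (hγ : 0 < γ) (x : H)
    -- `q = prox_{γθφ}(d_D(Mx))` :
    (q : ℝ)
    (hq : ∀ t : ℝ, (γ * θ) * φ q + (Metric.infDist (M x) D - q) ^ 2 / 2
      ≤ (γ * θ) * φ t + (Metric.infDist (M x) D - t) ^ 2 / 2)
    -- `p = prox_{γh} x` :
    (p : H)
    (hp : ∀ y : H, γ * h p + ‖x - p‖ ^ 2 / 2 ≤ γ * h y + ‖x - y‖ ^ 2 / 2) :
    (M x ∉ D → p = x + (θ⁻¹ * (Metric.infDist (M x) D - q) / Metric.infDist (M x) D) •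
      ContinuousLinearMap.adjoint M (projD (M x) - M x)) ∧
    (M x ∈ D → p = x) := by
  have hθ0 : θ ≠ 0 := ne_of_gt hθ
  -- φ is monotone on [0, ∞)
  have hφmono : ∀ s t : ℝ, 0 ≤ s → s ≤ t → φ s ≤ φ t := by
    intro s t hs hst
    rcases eq_or_lt_of_le hst with rfl | hlt
    · exact le_rfl
    have ht : (0:ℝ) < t := lt_of_le_of_lt hs hlt
    have ha : (0:ℝ) ≤ (t + s) / (2 * t) := by positivity
    have hb : (0:ℝ) ≤ (t - s) / (2 * t) := by
      apply div_nonneg (by linarith) (by linarith)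
    have ht' : t ≠ 0 := ne_of_gt ht
    have hab : (t + s) / (2 * t) + (t - s) / (2 * t) = 1 := by
      field_simp; ring
    have hcomb := hconv.2 (Set.mem_univ t) (Set.mem_univ (-t)) ha hb hab
    simp only [smul_eq_mul] at hcomb
    have he1 : (t + s) / (2 * t) * t + (t - s) / (2 * t) * (-t) = s := by
      field_simp; ring
    rw [he1, heven, ← add_mul, hab, one_mul] at hcomb
    exact hcomb
  -- infDist equals distance to projection
  have hdist : ∀ y : G, Metric.infDist y D = dist y (projD y) := by
    intro y
    refine le_antisymm (Metric.infDist_le_dist_of_mem (hproj y).1) ?_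
    by_contra hc
    push_neg at hc
    obtain ⟨z, hz, hz2⟩ := (Metric.infDist_lt_iff hDne).1 hc
    exact absurd ((hproj y).2 z hz) (not_le.2 hz2)
  -- M (M* w) = θ • w
  have hMM : ∀ w : G, M (ContinuousLinearMap.adjoint M w) = θ • w := by
    intro w
    have := ContinuousLinearMap.ext_iff.1 hM w
    simpa using this
  -- ‖M* w‖² = θ ‖w‖²
  have hadj_norm : ∀ w : G, ‖ContinuousLinearMap.adjoint M w‖ ^ 2 = θ * ‖w‖ ^ 2 := by
    intro w
    have h1 : (inner ℝ (ContinuousLinearMap.adjoint M w) (ContinuousLinearMap.adjoint M w) : ℝ)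
        = inner ℝ w (M (ContinuousLinearMap.adjoint M w)) :=
      ContinuousLinearMap.adjoint_inner_left M _ w
    rw [real_inner_self_eq_norm_sq, hMM, real_inner_smul_right,
      real_inner_self_eq_norm_sq] at h1
    exact h1
  -- ‖M z‖² ≤ θ ‖z‖²
  have hMz : ∀ z : H, ‖M z‖ ^ 2 ≤ θ * ‖z‖ ^ 2 := by
    intro z
    have h1 : ‖M z‖ ^ 2 ≤ ‖z‖ * ‖ContinuousLinearMap.adjoint M (M z)‖ := by
      have h2 : (inner ℝ (M z) (M z) : ℝ) = inner ℝ z (ContinuousLinearMap.adjoint M (M z)) :=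
        (ContinuousLinearMap.adjoint_inner_right M z (M z)).symm
      rw [real_inner_self_eq_norm_sq] at h2
      rw [h2]
      exact real_inner_le_norm z _
    have h3 : ‖ContinuousLinearMap.adjoint M (M z)‖ ^ 2 = θ * ‖M z‖ ^ 2 := hadj_norm (M z)
    have ha : (0:ℝ) ≤ ‖M z‖ ^ 2 := sq_nonneg _
    have h4 : (‖M z‖ ^ 2) ^ 2 ≤ (‖z‖ * ‖ContinuousLinearMap.adjoint M (M z)‖) ^ 2 :=
      pow_le_pow_left₀ ha h1 2
    have h5 : (‖z‖ * ‖ContinuousLinearMap.adjoint M (M z)‖) ^ 2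
        = ‖z‖ ^ 2 * (θ * ‖M z‖ ^ 2) := by rw [mul_pow, h3]
    rcases eq_or_lt_of_le ha with h0 | h0
    · rw [← h0]; positivity
    · nlinarith [h4, h5, h0, sq_nonneg ‖z‖]
  -- Case M x ∈ D
  have hcase2 : M x ∈ D → p = x := by
    intro hmem
    have hr0 : Metric.infDist (M x) D = 0 := Metric.infDist_zero_of_mem hmem
    have h1 := hp x
    rw [hdef p, hdef x, hr0] at h1
    simp only [sub_self, norm_zero] at h1
    have h2 : φ 0 ≤ φ (Metric.infDist (M p) D) := hφmono 0 _ le_rfl Metric.infDist_nonneg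
    have h2' := mul_le_mul_of_nonneg_left h2 hγ.le
    have h3 : ‖x - p‖ ^ 2 ≤ 0 := by nlinarith
    have h4 : ‖x - p‖ = 0 := by nlinarith [norm_nonneg (x - p)]
    exact (sub_eq_zero.1 (norm_eq_zero.1 h4)).symm
  refine ⟨?_, hcase2⟩
  intro hnmem
  set r := Metric.infDist (M x) D with hr_def
  have hr : 0 < r := (hDclosed.notMem_iff_infDist_pos hDne).1 hnmem
  have hr0 : r ≠ 0 := ne_of_gt hr
  -- bounds on q
  have hq0 : 0 ≤ q := by
    have h1 := hq (-q)
    rw [heven] at h1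
    nlinarith
  have hqr : q ≤ r := by
    by_contra hc
    push_neg at hc
    have h1 := hq r
    have h2 : φ r ≤ φ q := hφmono r q (le_of_lt hr) (le_of_lt hc)
    nlinarith [mul_pos hγ hθ]
  -- the candidate point
  set w : G := projD (M x) - M x with hw_def
  set c : ℝ := θ⁻¹ * (r - q) / r with hc_def
  set u : H := ContinuousLinearMap.adjoint M w with hu_def
  set p₀ : H := x + c • u with hp0_def
  have hwn : ‖w‖ = r := by
    rw [hw_def, ← neg_sub, norm_neg, ← dist_eq_norm, ← hdist (M x)]
  have hMu : M u = θ • w := hMM w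
  have hct : c * θ = (r - q) / r := by
    rw [hc_def]; field_simp
  have hMp₀ : M p₀ = M x + ((r - q) / r) • w := by
    rw [hp0_def, map_add, map_smul, hMu, smul_smul, hct]
  -- d_D (M p₀) = q
  have hMp₀x : M p₀ - M x = ((r - q) / r) • w := by rw [hMp₀]; abel
  have hdistp₀x : dist (M x) (M p₀) = r - q := by
    rw [dist_eq_norm, ← neg_sub (M p₀) (M x), norm_neg, hMp₀x, norm_smul, hwn,
      Real.norm_eq_abs, abs_of_nonneg (div_nonneg (by linarith) (le_of_lt hr))]
    field_simp
  have hMp₀proj : M p₀ - projD (M x) = (q / r) • (M x - projD (M x)) := by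
    rw [hMp₀, hw_def]
    have hco : (q / r : ℝ) = 1 - (r - q) / r := by field_simp; ring
    rw [hco]
    module
  have hs₀ : Metric.infDist (M p₀) D = q := by
    have hub : Metric.infDist (M p₀) D ≤ q := by
      have := Metric.infDist_le_dist_of_mem (s := D) (x := M p₀) (hproj (M x)).1
      rw [dist_eq_norm, hMp₀proj, norm_smul, Real.norm_eq_abs,
        abs_of_nonneg (div_nonneg hq0 (le_of_lt hr)), ← dist_eq_norm, ← hdist (M x)] at this
      calc Metric.infDist (M p₀) D ≤ q / r * r := this
        _ = q := by field_simp
    have hlb : q ≤ Metric.infDist (M p₀) D := by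
      have := Metric.infDist_le_infDist_add_dist (s := D) (x := M x) (y := M p₀)
      rw [hdistp₀x] at this
      linarith
    linarith
  have hun : ‖u‖ ^ 2 = θ * r ^ 2 := by rw [hu_def, hadj_norm, hwn]
  have hxp₀ : ‖x - p₀‖ ^ 2 = (r - q) ^ 2 / θ := by
    have : x - p₀ = -(c • u) := by rw [hp0_def]; abel
    rw [this, norm_neg, norm_smul, Real.norm_eq_abs, mul_pow, sq_abs, hun, hc_def]
    field_simp
  -- minimality of p₀
  have hmin : ∀ y : H, γ * φ q + (r - q) ^ 2 / θ / 2 ≤ γ * h y + ‖x - y‖ ^ 2 / 2 := by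
    intro y
    set s := Metric.infDist (M y) D with hs_def
    rw [hdef y, ← hs_def]
    have h1 := hq s
    have h2 : (r - s) ^ 2 ≤ θ * ‖x - y‖ ^ 2 := by
      have ha := Metric.infDist_le_infDist_add_dist (s := D) (x := M x) (y := M y)
      have hb := Metric.infDist_le_infDist_add_dist (s := D) (x := M y) (y := M x)
      rw [dist_comm] at hb
      have hd : dist (M x) (M y) = ‖M (x - y)‖ := by
        rw [dist_eq_norm, map_sub]
      have hsq : (r - s) ^ 2 ≤ dist (M x) (M y) ^ 2 := by
        nlinarith [dist_nonneg (x := M x) (y := M y)]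
      rw [hd] at hsq
      exact le_trans hsq (hMz (x - y))
    have h2θ : (0:ℝ) < 2 * θ := by positivity
    rw [← mul_le_mul_iff_of_pos_right h2θ]
    have e1 : (γ * φ q + (r - q) ^ 2 / θ / 2) * (2 * θ)
        = 2 * (γ * θ * φ q) + (r - q) ^ 2 := by field_simp
    have e2 : (γ * φ s + ‖x - y‖ ^ 2 / 2) * (2 * θ)
        = 2 * (γ * θ * φ s) + θ * ‖x - y‖ ^ 2 := by ring
    rw [e1, e2]
    linarith [h1, h2]
  -- F p ≤ F p₀ and F p₀ ≤ F p, hence equal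
  have hFp₀ : γ * h p₀ + ‖x - p₀‖ ^ 2 / 2 = γ * φ q + (r - q) ^ 2 / θ / 2 := by
    rw [hdef p₀, hs₀, hxp₀, div_div]
  have hFple : γ * h p + ‖x - p‖ ^ 2 / 2 = γ * φ q + (r - q) ^ 2 / θ / 2 := by
    have h1 := hp p₀
    rw [hFp₀] at h1
    have h2 := hmin p
    linarith
  -- midpoint argument
  set m : H := (2:ℝ)⁻¹ • (p + p₀) with hm_def
  have hMm : M m = (2:ℝ)⁻¹ • (M p + M p₀) := by rw [hm_def, map_smul, map_add]
  -- infDist midpoint convexity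
  have hmid : Metric.infDist (M m) D
      ≤ (Metric.infDist (M p) D + Metric.infDist (M p₀) D) / 2 := by
    set pa := projD (M p)
    set pb := projD (M p₀)
    have hmem : (2:ℝ)⁻¹ • pa + (2:ℝ)⁻¹ • pb ∈ D :=
      hDconv (hproj (M p)).1 (hproj (M p₀)).1 (by norm_num) (by norm_num) (by norm_num)
    have h1 := Metric.infDist_le_dist_of_mem (x := M m) hmem
    have h2 : M m - ((2:ℝ)⁻¹ • pa + (2:ℝ)⁻¹ • pb)
        = (2:ℝ)⁻¹ • ((M p - pa) + (M p₀ - pb)) := by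
      rw [hMm]; module
    have h3 : dist (M m) ((2:ℝ)⁻¹ • pa + (2:ℝ)⁻¹ • pb)
        ≤ (dist (M p) pa + dist (M p₀) pb) / 2 := by
      rw [dist_eq_norm, h2, norm_smul, Real.norm_eq_abs]
      rw [dist_eq_norm, dist_eq_norm]
      have := norm_add_le (M p - pa) (M p₀ - pb)
      rw [abs_of_nonneg (by norm_num : (0:ℝ) ≤ (2:ℝ)⁻¹)]
      nlinarith [norm_nonneg (M p - pa), norm_nonneg (M p₀ - pb)]
    rw [hdist (M p), hdist (M p₀)]
    exact le_trans h1 h3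
  have hhm : h m ≤ (h p + h p₀) / 2 := by
    rw [hdef m, hdef p, hdef p₀]
    have h1 : φ (Metric.infDist (M m) D)
        ≤ φ ((Metric.infDist (M p) D + Metric.infDist (M p₀) D) / 2) :=
      hφmono _ _ Metric.infDist_nonneg hmid
    have h2 := hconv.2 (Set.mem_univ (Metric.infDist (M p) D))
      (Set.mem_univ (Metric.infDist (M p₀) D))
      (by norm_num : (0:ℝ) ≤ 1/2) (by norm_num : (0:ℝ) ≤ 1/2) (by norm_num)
    rw [smul_eq_mul, smul_eq_mul, smul_eq_mul, smul_eq_mul] at h2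
    calc φ (Metric.infDist (M m) D)
        ≤ φ ((Metric.infDist (M p) D + Metric.infDist (M p₀) D) / 2) := h1
      _ = φ (1/2 * Metric.infDist (M p) D + 1/2 * Metric.infDist (M p₀) D) := by ring_nf
      _ ≤ 1/2 * φ (Metric.infDist (M p) D) + 1/2 * φ (Metric.infDist (M p₀) D) := h2
      _ = (φ (Metric.infDist (M p) D) + φ (Metric.infDist (M p₀) D)) / 2 := by ring
  have hxm : ‖x - m‖ ^ 2 = (‖x - p‖ ^ 2 + ‖x - p₀‖ ^ 2) / 2 - ‖p - p₀‖ ^ 2 / 4 := by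
    have h1 : x - m = (2:ℝ)⁻¹ • ((x - p) + (x - p₀)) := by
      rw [hm_def]; module
    have h2 : p - p₀ = (x - p₀) - (x - p) := by abel
    rw [h1, norm_smul, Real.norm_eq_abs, abs_of_nonneg (by norm_num : (0:ℝ) ≤ (2:ℝ)⁻¹),
      mul_pow, h2]
    have h3 := norm_add_sq_real (x - p) (x - p₀)
    have h4 := norm_sub_sq_real (x - p₀) (x - p)
    have h5 := real_inner_comm (x - p) (x - p₀)
    nlinarith [h3, h4, h5]
  -- conclude p = p₀
  have hfinal := hp m
  have hFm : γ * h m + ‖x - m‖ ^ 2 / 2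
      ≤ γ * φ q + (r - q) ^ 2 / θ / 2 - ‖p - p₀‖ ^ 2 / 8 := by
    rw [hxm]
    have := hmin p₀
    rw [hdef p₀, hs₀] at *
    nlinarith [hFp₀, hFple]
  have hpp₀ : ‖p - p₀‖ ^ 2 ≤ 0 := by
    rw [hFple] at hfinal
    linarith
  have h5 : ‖p - p₀‖ = 0 := by nlinarith [norm_nonneg (p - p₀), sq_nonneg ‖p - p₀‖]
  have h7 : p = p₀ := sub_eq_zero.1 (norm_eq_zero.1 h5)
  rw [h7, hp0_def]
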